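/- For every order N ∈ ℕ with N ≥ 3 and mode dimensions D_1,...,D_N ∈ ℕ with D_n ≥ 2 for all n, there exists a tensor completion problem — i.e. a loss L(W) = (1/|Ω|)·Σ_{(d_1,...,d_N)∈Ω}(W_{d_1,...,d_N} − W*_{d_1,...,d_N})² with ground truth W* ∈ ℝ^{D_1×⋯×D_N} and set of observed entries Ω ⊆ [D_1]×⋯×[D_N] — such that for every mode tree T over [N], the set R_T := {(rank ⟦W⟧_ν)_{ν∈T∖{[N]}} : W ∈ ℝ^{D_1×⋯×D_N}, L(W) = 0} of hierarchical tensor ranks of tensors fitting the observations includes two elements (R_ν)_{ν∈T∖{[N]}} and (R'_ν)_{ν∈T∖{[N]}} for which: (i) there exists no (R''_ν)_{ν∈T∖{[N]}} ∈ R_T different from both of them satisfying (R''_ν)_ν ≤ (R_ν)_ν or (R''_ν)_ν ≤ (R'_ν)_ν; and (ii) neither (R_ν)_ν ≤ (R'_ν)_ν nor (R'_ν)_ν ≤ (R_ν)_ν; here ≤ denotes the standard product partial order on tuples ((r_1,...,r_K) ≤ (r'_1,...,r'_K) iff r_i ≤ r'_i for all i). In particular, R_T contains multiple minimal elements, none smaller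 than or equal to the other. -/

import Mathlib

namespace HTF

/-- Rooted tree whose leaves are labeled by elements of `Fin N`. -/
inductive MTree (N : ℕ) : Type
  | leaf : Fin N → MTree N
  | node : List (MTree N) → MTree N

noncomputable instance {N : ℕ} : DecidableEq (MTree N) := fun _ _ => Classical.dec _

namespace MTree

variable {N : ℕ}

/-- The list of leaf labels of the tree. -/
def leafList : MTree N → List (Fin N)
  | .leaf i => [i]
  | .node ts => ts.attach.flatMap fun t => t.1.leafList
decreasing_by simp only [MTree.node.sizeOf_spec]; have := List.sizeOf_lt_of_mem t.2; omega

/-- The label of a node: set of leaf indices appearing in its subtree. -/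
def label (t : MTree N) : Finset (Fin N) := t.leafList.toFinset

/-- All nodes (subtrees) of the tree. -/
def nodes : MTree N → List (MTree N)
  | .leaf i => [.leaf i]
  | .node ts => .node ts :: ts.attach.flatMap fun t => t.1.nodes
decreasing_by simp only [MTree.node.sizeOf_spec]; have := List.sizeOf_lt_of_mem t.2; omega

/-- The children of a node. -/
def children : MTree N → List (MTree N)
  | .leaf _ => []
  | .node ts => ts

/-- Interior (non-leaf) node. -/
def IsInterior : MTree N → Prop
  | .leaf _ => False
  | .node _ => True

/-- Every non-leaf node has at least one child. -/
def Branching : MTree N → Prop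
  | .leaf _ => True
  | .node ts => ts ≠ [] ∧ ∀ t ∈ ts.attach, Branching t.1
decreasing_by simp only [MTree.node.sizeOf_spec]; have := List.sizeOf_lt_of_mem t.2; omega

/-- A valid mode tree over `[N]`: it has exactly `N` leaves, labeled `{1},...,{N}`
(each index appearing exactly once), and interior nodes have children. -/
def Valid (t : MTree N) : Prop :=
  t.leafList.Nodup ∧ (∀ i : Fin N, i ∈ t.leafList) ∧ t.Branching

/-- The parent of node `ν` in the tree (first argument), if it exists. -/
noncomputable def parentIn : MTree N → MTree N → Option (MTree N)
  | .leaf _, _ => none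
  | .node ts, ν =>
      if ν ∈ ts then some (.node ts)
      else ts.attach.findSome? fun t => parentIn t.1 ν
termination_by T _ => sizeOf T
decreasing_by simp only [MTree.node.sizeOf_spec]; have := List.sizeOf_lt_of_mem t.2; omega

end MTree

open MTree

variable {N : ℕ} (D : Fin N → ℕ)

/-- Full index set of an order-`N` tensor with mode dimensions `D`. -/
abbrev Idx : Type := ∀ n, Fin (D n)

/-- The intermediate tensors `W^(ν,r)` of a hierarchical tensor factorization with
local-component numbers `R` and weight matrices `W` (columns indexed by `ℕ`).
An order-`|label ν|` tensor is represented as a function of a full index tuple that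
only depends on the coordinates in `label ν`; with this representation, the tensor
product of tensors over disjoint mode sets is pointwise multiplication and the mode
permutation `π_ν` is the identity. -/
noncomputable def interm (R : MTree N → ℕ) (W : ∀ ν : MTree N, Fin (R ν) → ℕ → ℝ) :
    MTree N → ℕ → Idx D → ℝ
  | .leaf i, r => fun x =>
      if h : R (.leaf i) = D i then W (.leaf i) (Fin.cast h.symm (x i)) r else 0
  | .node ts, r => fun x =>
      ∑ r' : Fin (R (.node ts)),
        W (.node ts) r' r * (ts.attach.map fun t => interm R W t.1 (r' : ℕ) x).prod
decreasing_by simp only [MTree.node.sizeOf_spec]; have := List.sizeOf_lt_of_mem t.2; omega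

/-- The end tensor `W_H` of the hierarchical tensor factorization with mode tree `T`. -/
noncomputable def endT (R : MTree N → ℕ) (W : ∀ ν : MTree N, Fin (R ν) → ℕ → ℝ)
    (T : MTree N) : Idx D → ℝ :=
  interm D R W T 0

/-- Entry `(i, j)` of the weight matrix at node `ν` (zero outside the row range). -/
noncomputable def went (R : MTree N → ℕ) (W : ∀ ν : MTree N, Fin (R ν) → ℕ → ℝ)
    (ν : MTree N) (i j : ℕ) : ℝ :=
  if h : i < R ν then W ν ⟨i, h⟩ j else 0

/-- `R_{Pa(ν)}` : the number of local components at the parent of `ν` in `T`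
(`1` if `ν` is the root). -/
noncomputable def Rpar (R : MTree N → ℕ) (T ν : MTree N) : ℕ :=
  if ν = T then 1 else ((parentIn T ν).map R).getD 0

/-- Replace the weight matrix at node `μ` by `A`, keeping all other weight matrices. -/
noncomputable def replace (R : MTree N → ℕ) (W : ∀ ν : MTree N, Fin (R ν) → ℕ → ℝ)
    (μ : MTree N) (A : Fin (R μ) → ℕ → ℝ) : ∀ ν : MTree N, Fin (R ν) → ℕ → ℝ :=
  fun ν => if h : ν = μ then fun i j => A (Fin.cast (congrArg R h) i) j else W ν

/-- Frobenius (Euclidean) inner product of order-`N` tensors. -/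
noncomputable def tinner (A B : Idx D → ℝ) : ℝ := ∑ x, A x * B x

/-- Frobenius norm of an order-`N` tensor. -/
noncomputable def tnorm (A : Idx D → ℝ) : ℝ := Real.sqrt (∑ x, (A x) ^ 2)

/-- Frobenius norm of an order-`|s|` tensor represented as a function of a full index
tuple depending only on the coordinates in `s` (so that the sum over the full index
set over-counts each entry `∏_{n ∉ s} D n` times). -/
noncomputable def rnorm (s : Finset (Fin N)) (A : Idx D → ℝ) : ℝ :=
  Real.sqrt ((∑ x, (A x) ^ 2) / ∏ n ∈ sᶜ, (D n : ℝ))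

/-- Squared norm of the `r`'th column of the weight matrix at node `c`. -/
noncomputable def colSq (R : MTree N → ℕ) (W : ∀ ν : MTree N, Fin (R ν) → ℕ → ℝ)
    (c : MTree N) (r : ℕ) : ℝ :=
  ∑ i : Fin (R c), (W c i r) ^ 2

/-- Squared norm of the `r`'th row of the weight matrix at node `ν` of `T`. -/
noncomputable def rowSq (R : MTree N → ℕ) (W : ∀ ν : MTree N, Fin (R ν) → ℕ → ℝ)
    (T ν : MTree N) (r : ℕ) : ℝ :=
  ∑ j : Fin (Rpar R T ν), (went R W ν r (j : ℕ)) ^ 2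

/-- `σ^(ν,r)` : the norm of the `(ν,r)`'th local component, i.e. the product of the
norms of the vectors in `LC(ν,r)` (the `r`'th row of `W^(ν)` together with the `r`'th
columns of the weight matrices of the children of `ν`). -/
noncomputable def sigmaLoc (R : MTree N → ℕ) (W : ∀ ν : MTree N, Fin (R ν) → ℕ → ℝ)
    (T ν : MTree N) (r : ℕ) : ℝ :=
  Real.sqrt (rowSq R W T ν r) * (ν.children.map fun c => Real.sqrt (colSq R W c r)).prod

/-- `PadR_r(W^(ν)_{r,:})` : the matrix whose `r`'th row is the `r`'th row of `W^(ν)`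
and whose other rows are zero. -/
noncomputable def padRow (R : MTree N → ℕ) (W : ∀ ν : MTree N, Fin (R ν) → ℕ → ℝ)
    (ν : MTree N) (r : ℕ) : Fin (R ν) → ℕ → ℝ :=
  fun i j => if (i : ℕ) = r then W ν i j else 0

/-- `PadC_r(W^(c)_{:,r})` : the matrix whose `r`'th column is the `r`'th column of
`W^(c)` and whose other columns are zero. -/
noncomputable def padCol (R : MTree N → ℕ) (W : ∀ ν : MTree N, Fin (R ν) → ℕ → ℝ)
    (c : MTree N) (r : ℕ) : Fin (R c) → ℕ → ℝ :=
  fun i j => if j = r then W c i r else 0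

/-- `Ĉ^(ν,r)` : the end tensor obtained by normalizing the `r`'th local component at
`ν` and setting all other local components at `ν` to zero, i.e. the end tensor computed
with `W^(ν)` replaced by `σ^{-1} · PadR_r(W^(ν)_{r,:})` (and `0` if `σ^(ν,r) = 0`). -/
noncomputable def hatC (R : MTree N → ℕ) (W : ∀ ν : MTree N, Fin (R ν) → ℕ → ℝ)
    (T ν : MTree N) (r : ℕ) : Idx D → ℝ :=
  if sigmaLoc R W T ν r = 0 then 0
  else endT D R (replace R W ν fun i j =>
    if (i : ℕ) = r then (sigmaLoc R W T ν r)⁻¹ * W ν i j else 0) T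

/-- The objective `φ_H = L_H ∘ (end tensor)`. -/
noncomputable def obj (L : (Idx D → ℝ) → ℝ) (R : MTree N → ℕ) (T : MTree N)
    (W : ∀ ν : MTree N, Fin (R ν) → ℕ → ℝ) : ℝ :=
  L (endT D R W T)

/-- Update the single entry `(i, j)` of the weight matrix at node `μ` to the value `s`. -/
noncomputable def upd (R : MTree N → ℕ) (W : ∀ ν : MTree N, Fin (R ν) → ℕ → ℝ)
    (μ : MTree N) (i j : ℕ) (s : ℝ) : ∀ ν : MTree N, Fin (R ν) → ℕ → ℝ :=
  fun ν i' j' => if ν = μ ∧ (i' : ℕ) = i ∧ j' = j then s else W ν i' j'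

/-- `∂φ_H/∂W^(μ)_{i,j}` : the partial derivative of the objective with respect to the
`(i,j)` entry of the weight matrix at node `μ`, at the point `W`. -/
noncomputable def dObj (L : (Idx D → ℝ) → ℝ) (R : MTree N → ℕ) (T : MTree N)
    (W : ∀ ν : MTree N, Fin (R ν) → ℕ → ℝ) (μ : MTree N) (i j : ℕ) : ℝ :=
  deriv (fun s : ℝ => obj D L R T (upd R W μ i j s)) (went R W μ i j)

/-- `∇L(A)` : the gradient of a loss over tensors, entrywise. -/
noncomputable def tgrad (L : (Idx D → ℝ) → ℝ) (A : Idx D → ℝ) : Idx D → ℝ :=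
  fun x => deriv (fun s : ℝ => L (Function.update A x s)) (A x)

/-- Local smoothness of the loss: its gradient is Lipschitz on compact sets. -/
def LocSmooth (L : (Idx D → ℝ) → ℝ) : Prop :=
  ∀ K : Set (Idx D → ℝ), IsCompact K → ∃ β : NNReal, LipschitzOnWith β (tgrad D L) K

/-- Gradient flow over the objective: each entry of each weight matrix moves against
its partial derivative. -/
def GradFlow (L : (Idx D → ℝ) → ℝ) (R : MTree N → ℕ) (T : MTree N)
    (Wt : ℝ → ∀ ν : MTree N, Fin (R ν) → ℕ → ℝ) : Prop :=
  ∀ (ν : MTree N) (i : Fin (R ν)) (j : ℕ) (t : ℝ), 0 ≤ t →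
    HasDerivAt (fun s : ℝ => Wt s ν i j) (- dObj D L R T (Wt t) ν (i : ℕ) j) t

/-- The matricization of an order-`N` tensor according to the index set `I` : the
matrix whose rows are indexed by the modes in `I` and whose columns are indexed by the
remaining modes. -/
noncomputable def matricize (I : Finset (Fin N)) (A : Idx D → ℝ) :
    Matrix (∀ i : {n // n ∈ I}, Fin (D i)) (∀ j : {n // n ∉ I}, Fin (D j)) ℝ :=
  fun ρ κ => A fun n => if h : n ∈ I then ρ ⟨n, h⟩ else κ ⟨n, h⟩

/-- Frobenius norm of the weight matrix `W^(ν) ∈ ℝ^{R_ν × R_{Pa(ν)}}` at node `ν` of `T`. -/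
noncomputable def wFro (R : MTree N → ℕ) (W : ∀ ν : MTree N, Fin (R ν) → ℕ → ℝ)
    (T ν : MTree N) : ℝ :=
  Real.sqrt (∑ i : Fin (R ν), ∑ j : Fin (Rpar R T ν), (W ν i (j : ℕ)) ^ 2)

/-- The weights obtained by pruning the `(ν,r)`'th local component: the `r`'th row of
`W^(ν)` and the `r`'th column of `W^(c)` for every child `c` of `ν` are set to zero. -/
noncomputable def pruneLC (R : MTree N → ℕ) (W : ∀ ν : MTree N, Fin (R ν) → ℕ → ℝ)
    (ν : MTree N) (r : ℕ) : ∀ μ : MTree N, Fin (R μ) → ℕ → ℝ :=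
  fun μ i j =>
    if μ = ν ∧ (i : ℕ) = r then 0
    else if μ ∈ ν.children ∧ j = r then 0
    else W μ i j

end HTF

section Helpers

open Matrix in
theorem rank_ge_two {m n : Type*} [Fintype m] [Fintype n]
    (M : Matrix m n ℝ) (i0 i1 : m) (j0 j1 : n)
    (h : M i0 j0 * M i1 j1 ≠ M i0 j1 * M i1 j0) : 2 ≤ M.rank := by
  classical
  set f : Fin 2 → m := ![i0, i1]
  set g : Fin 2 → n := ![j0, j1]
  set P : Matrix (Fin 2) m ℝ := Matrix.of fun a i => if i = f a then 1 else 0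
  set Q : Matrix n (Fin 2) ℝ := Matrix.of fun j b => if j = g b then 1 else 0
  have hT : P * M * Q = Matrix.of fun a b => M (f a) (g b) := by
    ext a b
    simp only [Matrix.mul_apply, Matrix.of_apply, P, Q]
    simp [ite_mul, mul_ite, Finset.sum_ite_eq]
  have hrank : (P * M * Q).rank = 2 := by
    rw [hT]
    have hu : IsUnit (Matrix.of fun a b => M (f a) (g b) : Matrix (Fin 2) (Fin 2) ℝ) := by
      rw [Matrix.isUnit_iff_isUnit_det, isUnit_iff_ne_zero, Matrix.det_fin_two]
      simpa [f, g] using sub_ne_zero.mpr h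
    simpa using Matrix.rank_of_isUnit _ hu
  calc (2:ℕ) = (P * M * Q).rank := hrank.symm
    _ ≤ (P * M).rank := Matrix.rank_mul_le_left _ _
    _ ≤ M.rank := Matrix.rank_mul_le_right _ _

theorem rank_ge_one' {m n : Type*} [Fintype m] [Fintype n]
    (M : Matrix m n ℝ) (i0 : m) (j0 : n) (h : M i0 j0 ≠ 0) : 1 ≤ M.rank := by
  classical
  set P : Matrix (Fin 1) m ℝ := Matrix.of fun _ i => if i = i0 then 1 else 0
  set Q : Matrix n (Fin 1) ℝ := Matrix.of fun j _ => if j = j0 then 1 else 0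
  have hT : P * M * Q = Matrix.of fun _ _ => M i0 j0 := by
    ext a b
    simp only [Matrix.mul_apply, Matrix.of_apply, P, Q]
    simp [ite_mul, mul_ite, Finset.sum_ite_eq]
  have hrank : (P * M * Q).rank = 1 := by
    rw [hT]
    have hu : IsUnit (Matrix.of fun _ _ => M i0 j0 : Matrix (Fin 1) (Fin 1) ℝ) := by
      rw [Matrix.isUnit_iff_isUnit_det, isUnit_iff_ne_zero, Matrix.det_fin_one]
      exact h
    simpa using Matrix.rank_of_isUnit _ hu
  calc (1:ℕ) = (P * M * Q).rank := hrank.symm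
    _ ≤ (P * M).rank := Matrix.rank_mul_le_left _ _
    _ ≤ M.rank := Matrix.rank_mul_le_right _ _


namespace HTF
namespace MTree
variable {N : ℕ}
-- my lemmas
lemma leafList_ne_nil : ∀ (t : MTree N), t.Branching → t.leafList ≠ []
  | .leaf i, _ => by simp [leafList]
  | .node ts, h => by
      rw [Branching] at h
      obtain ⟨hne, hall⟩ := h
      obtain ⟨t0, hts⟩ := List.exists_mem_of_ne_nil ts hne
      have ht0 : (⟨t0, hts⟩ : {x // x ∈ ts}) ∈ ts.attach := List.mem_attach _ _
      have hrec := leafList_ne_nil t0 (hall ⟨t0, hts⟩ ht0)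
      rw [leafList]
      intro hcon
      rw [List.flatMap_eq_nil_iff] at hcon
      exact hrec (hcon _ ht0)
decreasing_by simp only [MTree.node.sizeOf_spec]; have := List.sizeOf_lt_of_mem hts; omega

lemma leaf_mem_nodes : ∀ (t : MTree N) (i : Fin N), i ∈ t.leafList → (MTree.leaf i) ∈ t.nodes
  | .leaf i', i, h => by
      rw [leafList] at h
      simp at h
      rw [nodes]
      simp [h]
  | .node ts, i, h => by
      rw [leafList] at h
      rw [List.mem_flatMap] at h
      obtain ⟨t0, ht0, hmem⟩ := h
      have hrec := leaf_mem_nodes t0.1 i hmem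
      rw [nodes]
      right
      exact List.mem_flatMap.mpr ⟨t0, ht0, hrec⟩
termination_by t => sizeOf t
decreasing_by simp only [MTree.node.sizeOf_spec]; have := List.sizeOf_lt_of_mem t0.2; omega

lemma branching_of_mem_nodes : ∀ (t : MTree N), t.Branching → ∀ ν ∈ t.nodes, ν.Branching
  | .leaf i, h, ν, hm => by
      rw [nodes] at hm
      simp at hm
      rw [hm]; exact h
  | .node ts, h, ν, hm => by
      rw [nodes] at hm
      rw [List.mem_cons] at hm
      rcases hm with hm | hm
      · rw [hm]; exact h
      · rw [List.mem_flatMap] at hm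
        obtain ⟨t0, ht0, hmem⟩ := hm
        rw [Branching] at h
        exact branching_of_mem_nodes t0.1 (h.2 t0 ht0) ν hmem
termination_by t => sizeOf t
decreasing_by simp only [MTree.node.sizeOf_spec]; have := List.sizeOf_lt_of_mem t0.2; omega

lemma label_nonempty (t : MTree N) (h : t.Branching) : t.label ≠ ∅ := by
  rw [label, ne_eq, List.toFinset_eq_empty_iff]
  exact leafList_ne_nil t h

lemma label_leaf (i : Fin N) : (MTree.leaf i : MTree N).label = {i} := by
  rw [label, leafList]
  simp

lemma leaf_ne_root {T : MTree N} (hV : T.Valid) {i j : Fin N} (hij : i ≠ j) :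
    (MTree.leaf i : MTree N) ≠ T := by
  intro h
  have := hV.2.1 j
  rw [← h, leafList] at this
  simp at this
  exact hij this.symm
end MTree

open MTree
variable {N : ℕ} (D : Fin N → ℕ)

/-- mix of two index tuples along I -/
def mixf (I : Finset (Fin N)) (x y : Idx D) : Idx D := fun n => if n ∈ I then x n else y n

lemma mixf_self (I : Finset (Fin N)) (x : Idx D) : mixf D I x x = x := by
  funext n; simp [mixf]

lemma matricize_entry (I : Finset (Fin N)) (A : Idx D → ℝ) (x y : Idx D) :
    matricize D I A (fun i => x i.1) (fun j => y j.1) = A (mixf D I x y) := by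
  simp only [matricize, mixf]
  congr 1

lemma rank_ge_two_of_points (I : Finset (Fin N)) (A : Idx D → ℝ) (x y : Idx D)
    (h : A x * A y ≠ A (mixf D I x y) * A (mixf D I y x)) :
    2 ≤ (matricize D I A).rank := by
  refine rank_ge_two (matricize D I A) (fun i => x i.1) (fun i => y i.1) (fun j => x j.1) (fun j => y j.1) ?_
  rw [matricize_entry, matricize_entry, matricize_entry, matricize_entry, mixf_self, mixf_self]
  exact h

lemma minor_eq_of_rank_le_one (I : Finset (Fin N)) (A : Idx D → ℝ) (x y : Idx D)
    (h : (matricize D I A).rank ≤ 1) :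
    A x * A y = A (mixf D I x y) * A (mixf D I y x) := by
  by_contra hc
  exact absurd (le_trans (rank_ge_two_of_points D I A x y hc) h) (by norm_num)

lemma rank_ge_one (I : Finset (Fin N)) (A : Idx D → ℝ) (x : Idx D) (h : A x ≠ 0) :
    1 ≤ (matricize D I A).rank := by
  refine rank_ge_one' (matricize D I A) (fun i => x i.1) (fun j => x j.1) ?_
  rw [matricize_entry, mixf_self]
  exact h


lemma rank_le_two_of_split (hD : ∀ n, 2 ≤ D n) (I : Finset (Fin N)) (A : Idx D → ℝ) (u v u' v' : Idx D → ℝ)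
    (hu : ∀ x y : Idx D, (∀ n ∈ I, x n = y n) → u x = u y)
    (hu' : ∀ x y : Idx D, (∀ n ∈ I, x n = y n) → u' x = u' y)
    (hv : ∀ x y : Idx D, (∀ n ∉ I, x n = y n) → v x = v y)
    (hv' : ∀ x y : Idx D, (∀ n ∉ I, x n = y n) → v' x = v' y)
    (hA : ∀ x, A x = u x * v x + u' x * v' x) :
    (matricize D I A).rank ≤ 2 := by
  classical
  have hz : ∀ n, (0 : ℕ) < D n := fun n => lt_of_lt_of_le two_pos (hD n)
  set dflt : Idx D := fun n => ⟨0, hz n⟩ with hdflt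
  set emb : (∀ i : {n // n ∈ I}, Fin (D i)) → Idx D :=
    fun ρ n => if h : n ∈ I then ρ ⟨n, h⟩ else dflt n with hemb
  set embc : (∀ j : {n // n ∉ I}, Fin (D j)) → Idx D :=
    fun κ n => if h : n ∉ I then κ ⟨n, h⟩ else dflt n with hembc
  set P : Matrix (∀ i : {n // n ∈ I}, Fin (D i)) (Fin 2) ℝ :=
    Matrix.of fun ρ t => if t = 0 then u (emb ρ) else u' (emb ρ) with hP
  set Q : Matrix (Fin 2) (∀ j : {n // n ∉ I}, Fin (D j)) ℝ :=
    Matrix.of fun t κ => if t = 0 then v (embc κ) else v' (embc κ) with hQ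
  have : matricize D I A = P * Q := by
    ext ρ κ
    have h1 : u (fun n => if h : n ∈ I then ρ ⟨n, h⟩ else κ ⟨n, h⟩) = u (emb ρ) := by
      apply hu; intro n hn; simp [hemb, hn]
    have h1' : u' (fun n => if h : n ∈ I then ρ ⟨n, h⟩ else κ ⟨n, h⟩) = u' (emb ρ) := by
      apply hu'; intro n hn; simp [hemb, hn]
    have h2 : v (fun n => if h : n ∈ I then ρ ⟨n, h⟩ else κ ⟨n, h⟩) = v (embc κ) := by
      apply hv; intro n hn; simp [hembc, hn]
    have h2' : v' (fun n => if h : n ∈ I then ρ ⟨n, h⟩ else κ ⟨n, h⟩) = v' (embc κ) := by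
      apply hv'; intro n hn; simp [hembc, hn]
    simp only [matricize, Matrix.mul_apply, hP, hQ, Matrix.of_apply, Fin.sum_univ_two]
    rw [hA]
    simp [h1, h1', h2, h2']
  rw [this]
  calc (P * Q).rank ≤ P.rank := Matrix.rank_mul_le_left _ _
    _ ≤ Fintype.card (Fin 2) := Matrix.rank_le_card_width _
    _ = 2 := by simp

lemma rank_le_one_of_split (hD : ∀ n, 2 ≤ D n) (I : Finset (Fin N)) (A : Idx D → ℝ) (u v : Idx D → ℝ)
    (hu : ∀ x y : Idx D, (∀ n ∈ I, x n = y n) → u x = u y)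
    (hv : ∀ x y : Idx D, (∀ n ∉ I, x n = y n) → v x = v y)
    (hA : ∀ x, A x = u x * v x) :
    (matricize D I A).rank ≤ 1 := by
  classical
  have hz : ∀ n, (0 : ℕ) < D n := fun n => lt_of_lt_of_le two_pos (hD n)
  set dflt : Idx D := fun n => ⟨0, hz n⟩ with hdflt
  set emb : (∀ i : {n // n ∈ I}, Fin (D i)) → Idx D :=
    fun ρ n => if h : n ∈ I then ρ ⟨n, h⟩ else dflt n with hemb
  set embc : (∀ j : {n // n ∉ I}, Fin (D j)) → Idx D :=
    fun κ n => if h : n ∉ I then κ ⟨n, h⟩ else dflt n with hembc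
  set P : Matrix (∀ i : {n // n ∈ I}, Fin (D i)) (Fin 1) ℝ :=
    Matrix.of fun ρ _ => u (emb ρ) with hP
  set Q : Matrix (Fin 1) (∀ j : {n // n ∉ I}, Fin (D j)) ℝ :=
    Matrix.of fun _ κ => v (embc κ) with hQ
  have : matricize D I A = P * Q := by
    ext ρ κ
    have h1 : u (fun n => if h : n ∈ I then ρ ⟨n, h⟩ else κ ⟨n, h⟩) = u (emb ρ) := by
      apply hu; intro n hn; simp [hemb, hn]
    have h2 : v (fun n => if h : n ∈ I then ρ ⟨n, h⟩ else κ ⟨n, h⟩) = v (embc κ) := by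
      apply hv; intro n hn; simp [hembc, hn]
    simp only [matricize, Matrix.mul_apply, hP, hQ, Matrix.of_apply, Fin.sum_univ_one]
    rw [hA, h1, h2]
  rw [this]
  calc (P * Q).rank ≤ P.rank := Matrix.rank_mul_le_left _ _
    _ ≤ Fintype.card (Fin 1) := Matrix.rank_le_card_width _
    _ = 1 := by simp

lemma rank_le_one_univ (A : Idx D → ℝ) : (matricize D Finset.univ A).rank ≤ 1 := by
  calc (matricize D Finset.univ A).rank ≤ Fintype.card (∀ j : {n // n ∉ (Finset.univ : Finset (Fin N))}, Fin (D j)) := Matrix.rank_le_card_width _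
    _ = 1 := by
        have : IsEmpty {n : Fin N // n ∉ (Finset.univ : Finset (Fin N))} := by
          constructor; rintro ⟨n, hn⟩; exact hn (Finset.mem_univ n)
        simp [Fintype.card_pi]


section Construction
variable (hD : ∀ n, 2 ≤ D n)

/-- pattern point -/
def pt (S : Finset (Fin N)) : Idx D :=
  fun n => if n ∈ S then ⟨1, lt_of_lt_of_le one_lt_two (hD n)⟩
    else ⟨0, lt_of_lt_of_le two_pos (hD n)⟩

lemma pt_le_one (S : Finset (Fin N)) (n : Fin N) : ((pt D hD S n : Fin (D n)) : ℕ) ≤ 1 := by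
  unfold pt; split <;> simp

lemma pt_val (S : Finset (Fin N)) (n : Fin N) :
    ((pt D hD S n : Fin (D n)) : ℕ) = if n ∈ S then 1 else 0 := by
  unfold pt; split <;> simp

/-- the candidate tensors: mode `i` separated -/
noncomputable def AA (i : Fin N) : Idx D → ℝ := fun x =>
  (∏ n, if ((x n : ℕ) ≤ 1) then (1:ℝ) else 0) *
    (1 + ∑ n ∈ Finset.univ.erase i, ((x n : ℕ) : ℝ))

lemma AA_pt (i : Fin N) (S : Finset (Fin N)) :
    AA D i (pt D hD S) = 1 + ((S.erase i).card : ℝ) := by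
  unfold AA
  have h1 : (∏ n, if (((pt D hD S n : Fin (D n)) : ℕ) ≤ 1) then (1:ℝ) else 0) = 1 := by
    apply Finset.prod_eq_one
    intro n _
    simp [pt_le_one D hD S n]
  rw [h1, one_mul]
  congr 1
  have h2 : ∀ n ∈ Finset.univ.erase i, (((pt D hD S n : Fin (D n)) : ℕ) : ℝ)
      = if n ∈ S then 1 else 0 := by
    intro n _
    rw [pt_val D hD S n]
    split <;> simp
  rw [Finset.sum_congr rfl h2, Finset.sum_ite_mem]
  have h3 : Finset.univ.erase i ∩ S = S.erase i := by
    ext a; simp [Finset.mem_erase, Finset.mem_inter, and_comm]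
  rw [h3, Finset.sum_const, nsmul_eq_mul, mul_one]

lemma mixf_pt (I S S' : Finset (Fin N)) :
    mixf D I (pt D hD S) (pt D hD S') = pt D hD ((S ∩ I) ∪ (S' \ I)) := by
  funext n
  unfold mixf pt
  by_cases h : n ∈ I <;> by_cases h2 : n ∈ S <;> by_cases h3 : n ∈ S' <;>
    simp [h, h2, h3, Finset.mem_union, Finset.mem_inter, Finset.mem_sdiff]


/-- cube indicator factor -/
noncomputable def cc (x : Idx D) (n : Fin N) : ℝ := if ((x n : ℕ) ≤ 1) then 1 else 0
noncomputable def tt (x : Idx D) (n : Fin N) : ℝ := ((x n : ℕ) : ℝ)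

lemma AA_eq (i : Fin N) (x : Idx D) :
    AA D i x = (∏ n, cc D x n) * (1 + ∑ n ∈ Finset.univ.erase i, tt D x n) := rfl

lemma rank_AA_le_two (hD : ∀ n, 2 ≤ D n) (i : Fin N) (I : Finset (Fin N)) :
    (matricize D I (AA D i)).rank ≤ 2 := by
  classical
  apply rank_le_two_of_split D hD I (AA D i)
    (fun x => (∏ n ∈ I, cc D x n) * (1 + ∑ n ∈ I.erase i, tt D x n))
    (fun x => ∏ n ∈ Iᶜ, cc D x n)
    (fun x => ∏ n ∈ I, cc D x n)
    (fun x => (∏ n ∈ Iᶜ, cc D x n) * (∑ n ∈ Iᶜ.erase i, tt D x n))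
  · intro x y hxy
    have hc : ∀ n ∈ I, cc D x n = cc D y n := fun n hn => by rw [cc, cc, hxy n hn]
    have ht : ∀ n ∈ I.erase i, tt D x n = tt D y n := fun n hn => by
      rw [tt, tt, hxy n (Finset.mem_of_mem_erase hn)]
    rw [Finset.prod_congr rfl hc, Finset.sum_congr rfl ht]
  · intro x y hxy
    have hc : ∀ n ∈ I, cc D x n = cc D y n := fun n hn => by rw [cc, cc, hxy n hn]
    rw [Finset.prod_congr rfl hc]
  · intro x y hxy
    have hc : ∀ n ∈ Iᶜ, cc D x n = cc D y n := fun n hn => by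
      rw [cc, cc, hxy n (by simpa using hn)]
    rw [Finset.prod_congr rfl hc]
  · intro x y hxy
    have hc : ∀ n ∈ Iᶜ, cc D x n = cc D y n := fun n hn => by
      rw [cc, cc, hxy n (by simpa using hn)]
    have ht : ∀ n ∈ Iᶜ.erase i, tt D x n = tt D y n := fun n hn => by
      rw [tt, tt, hxy n (by simpa using Finset.mem_of_mem_erase hn)]
    rw [Finset.prod_congr rfl hc, Finset.sum_congr rfl ht]
  · intro x
    rw [AA_eq]
    have hprod : (∏ n ∈ I, cc D x n) * (∏ n ∈ Iᶜ, cc D x n) = ∏ n, cc D x n :=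
      Finset.prod_mul_prod_compl I _
    have hsum : (∑ n ∈ I.erase i, tt D x n) + (∑ n ∈ Iᶜ.erase i, tt D x n)
        = ∑ n ∈ Finset.univ.erase i, tt D x n := by
      rw [← Finset.sum_union]
      · congr 1
        ext a
        simp [Finset.mem_erase, Finset.mem_union]
        tauto
      · rw [Finset.disjoint_left]
        intro a ha ha'
        have h1 := Finset.mem_of_mem_erase ha
        have h2 := Finset.mem_of_mem_erase ha'
        simp only [Finset.mem_compl] at h2
        exact h2 h1
    rw [← hprod, ← hsum]
    ring

lemma rank_AA_singleton (hD : ∀ n, 2 ≤ D n) (i : Fin N) :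
    (matricize D {i} (AA D i)).rank ≤ 1 := by
  classical
  apply rank_le_one_of_split D hD {i} (AA D i)
    (fun x => cc D x i)
    (fun x => (∏ n ∈ Finset.univ.erase i, cc D x n) * (1 + ∑ n ∈ Finset.univ.erase i, tt D x n))
  · intro x y hxy
    rw [cc, cc, hxy i (Finset.mem_singleton_self i)]
  · intro x y hxy
    have hne : ∀ n ∈ Finset.univ.erase i, x n = y n := by
      intro n hn
      simp only [Finset.mem_erase] at hn
      exact hxy n (by simp [hn.1])
    have hc : ∀ n ∈ Finset.univ.erase i, cc D x n = cc D y n := fun n hn => by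
      rw [cc, cc, hne n hn]
    have ht : ∀ n ∈ Finset.univ.erase i, tt D x n = tt D y n := fun n hn => by
      rw [tt, tt, hne n hn]
    rw [Finset.prod_congr rfl hc, Finset.sum_congr rfl ht]
  · intro x
    rw [AA_eq, ← Finset.mul_prod_erase Finset.univ _ (Finset.mem_univ i)]
    show cc D x i * _ * _ = _
    ring

lemma rank_AA_compl (hD : ∀ n, 2 ≤ D n) (i : Fin N) :
    (matricize D {i}ᶜ (AA D i)).rank ≤ 1 := by
  classical
  apply rank_le_one_of_split D hD {i}ᶜ (AA D i)
    (fun x => (∏ n ∈ Finset.univ.erase i, cc D x n) * (1 + ∑ n ∈ Finset.univ.erase i, tt D x n))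
    (fun x => cc D x i)
  · intro x y hxy
    have hne : ∀ n ∈ Finset.univ.erase i, x n = y n := by
      intro n hn
      simp only [Finset.mem_erase] at hn
      exact hxy n (by simp [hn.1])
    have hc : ∀ n ∈ Finset.univ.erase i, cc D x n = cc D y n := fun n hn => by
      rw [cc, cc, hne n hn]
    have ht : ∀ n ∈ Finset.univ.erase i, tt D x n = tt D y n := fun n hn => by
      rw [tt, tt, hne n hn]
    rw [Finset.prod_congr rfl hc, Finset.sum_congr rfl ht]
  · intro x y hxy
    rw [cc, cc, hxy i (by simp)]
  · intro x
    rw [AA_eq, ← Finset.mul_prod_erase Finset.univ _ (Finset.mem_univ i)]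
    show _ = (∏ n ∈ Finset.univ.erase i, cc D x n) * _ * cc D x i
    ring


lemma exists_mem_ne {I : Finset (Fin N)} {i : Fin N} (h0 : I ≠ ∅) (h1 : I ≠ {i}) :
    ∃ m ∈ I, m ≠ i := by
  by_contra hc
  push_neg at hc
  have : I ⊆ {i} := fun m hm => Finset.mem_singleton.mpr (hc m hm)
  rcases Finset.subset_singleton_iff.mp this with h | h
  · exact h0 h
  · exact h1 h

lemma rank_AA_ge_two (hD : ∀ n, 2 ≤ D n) (i : Fin N) (I : Finset (Fin N))
    (h0 : I ≠ ∅) (hu : I ≠ Finset.univ) (h1 : I ≠ {i}) (h2 : I ≠ {i}ᶜ) :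
    2 ≤ (matricize D I (AA D i)).rank := by
  classical
  obtain ⟨m, hmI, hmi⟩ := exists_mem_ne h0 h1
  have hc0 : Iᶜ ≠ ∅ := by
    intro h
    exact hu (by simpa using congrArg compl h)
  have hc1 : Iᶜ ≠ {i} := by
    intro h
    exact h2 (by simpa using congrArg compl h)
  obtain ⟨k, hkI', hki⟩ := exists_mem_ne hc0 hc1
  have hkI : k ∉ I := by simpa using hkI'
  have hmk : m ≠ k := fun h => hkI (h ▸ hmI)
  apply rank_ge_two_of_points D I (AA D i) (pt D hD ∅) (pt D hD {m, k})
  rw [mixf_pt, mixf_pt]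
  have e1 : (∅ ∩ I) ∪ ({m, k} \ I) = ({k} : Finset (Fin N)) := by
    ext a
    simp only [Finset.empty_inter, Finset.empty_union, Finset.mem_sdiff, Finset.mem_insert,
      Finset.mem_singleton]
    constructor
    · rintro ⟨h | h, ha⟩
      · exact absurd (h ▸ hmI) ha
      · exact h
    · rintro rfl; exact ⟨Or.inr rfl, hkI⟩
  have e2 : ({m, k} ∩ I) ∪ (∅ \ I) = ({m} : Finset (Fin N)) := by
    ext a
    simp only [Finset.empty_sdiff, Finset.union_empty, Finset.mem_inter, Finset.mem_insert,
      Finset.mem_singleton]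
    constructor
    · rintro ⟨h | h, ha⟩
      · exact h
      · exact absurd (h ▸ ha) hkI
    · rintro rfl; exact ⟨Or.inl rfl, hmI⟩
  rw [e1, e2, AA_pt, AA_pt, AA_pt, AA_pt]
  have c0 : ((∅ : Finset (Fin N)).erase i).card = 0 := by simp
  have cm : (({m} : Finset (Fin N)).erase i).card = 1 := by
    rw [Finset.erase_eq_of_notMem (by simp [hmi.symm, Ne.symm])]
    · simp
  have ck : (({k} : Finset (Fin N)).erase i).card = 1 := by
    rw [Finset.erase_eq_of_notMem (by simp [hki.symm, Ne.symm])]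
    · simp
  have cmk : (({m, k} : Finset (Fin N)).erase i).card = 2 := by
    rw [Finset.erase_eq_of_notMem (by simp [hmi.symm, hki.symm, Ne.symm])]
    · exact Finset.card_pair hmk
  rw [c0, cm, ck, cmk]
  norm_num

lemma cond_contra (hD : ∀ n, 2 ≤ D n) (A : Idx D → ℝ) (i j k : Fin N)
    (hij : i ≠ j) (hik : i ≠ k) (hjk : j ≠ k)
    (h1 : A (pt D hD ∅) = 1) (h2 : A (pt D hD {k}) = 2)
    (h3 : A (pt D hD {i, j}) = 2) (h4 : A (pt D hD {i, j, k}) = 3)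
    (hri : (matricize D {i} A).rank ≤ 1)
    {J : Finset (Fin N)} (hJ : (matricize D J A).rank ≤ 1)
    (hJcase : J = {j} ∨ J = {j}ᶜ) : False := by
  classical
  have setα1 : ((∅ : Finset (Fin N)) ∩ {i}) ∪ ({i, j} \ {i}) = ({j} : Finset (Fin N)) := by
    ext a
    by_cases hai : a = i <;> by_cases haj : a = j <;> simp_all
  have setα2 : (({i, j} : Finset (Fin N)) ∩ {i}) ∪ (∅ \ {i}) = ({i} : Finset (Fin N)) := by
    ext a
    by_cases hai : a = i <;> by_cases haj : a = j <;> simp_all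
  have setγ1 : (({j} : Finset (Fin N)) ∩ {i}) ∪ ({i, j, k} \ {i}) = ({j, k} : Finset (Fin N)) := by
    ext a
    by_cases hai : a = i <;> by_cases haj : a = j <;> by_cases hak : a = k <;> simp_all
  have setγ2 : (({i, j, k} : Finset (Fin N)) ∩ {i}) ∪ ({j} \ {i}) = ({i, j} : Finset (Fin N)) := by
    ext a
    by_cases hai : a = i <;> by_cases haj : a = j <;> by_cases hak : a = k <;> simp_all
  have hα := minor_eq_of_rank_le_one D {i} A (pt D hD ∅) (pt D hD {i, j}) hri
  rw [mixf_pt, mixf_pt, setα1, setα2, h1, h3] at hα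
  have hγ := minor_eq_of_rank_le_one D {i} A (pt D hD {j}) (pt D hD {i, j, k}) hri
  rw [mixf_pt, mixf_pt, setγ1, setγ2, h4, h3] at hγ
  have hδ : A (pt D hD {j, k}) = 2 * A (pt D hD {j}) := by
    have hd := minor_eq_of_rank_le_one D J A (pt D hD ∅) (pt D hD {j, k}) hJ
    rw [mixf_pt, mixf_pt] at hd
    rcases hJcase with rfl | rfl
    · have s1 : ((∅ : Finset (Fin N)) ∩ {j}) ∪ ({j, k} \ {j}) = ({k} : Finset (Fin N)) := by
        ext a
        by_cases haj : a = j <;> by_cases hak : a = k <;> simp_all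
      have s2 : (({j, k} : Finset (Fin N)) ∩ {j}) ∪ (∅ \ {j}) = ({j} : Finset (Fin N)) := by
        ext a
        by_cases haj : a = j <;> by_cases hak : a = k <;> simp_all
      rw [s1, s2, h1, h2] at hd
      linarith
    · have s1 : ((∅ : Finset (Fin N)) ∩ {j}ᶜ) ∪ ({j, k} \ {j}ᶜ) = ({j} : Finset (Fin N)) := by
        ext a
        by_cases haj : a = j <;> by_cases hak : a = k <;> simp_all
      have s2 : (({j, k} : Finset (Fin N)) ∩ {j}ᶜ) ∪ (∅ \ {j}ᶜ) = ({k} : Finset (Fin N)) := by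
        ext a
        by_cases haj : a = j <;> by_cases hak : a = k <;> simp_all
      rw [s1, s2, h1, h2] at hd
      linarith
  have hb : A (pt D hD {j}) = 0 := by
    rw [hδ] at hγ
    linarith
  rw [hb] at hα
  norm_num at hα


lemma pair_card_erase {i m k : Fin N} (hmi : m ≠ i) (hki : k ≠ i) (hmk : m ≠ k) :
    ((({m, k} : Finset (Fin N)).erase i).card) = 2 := by
  classical
  rw [Finset.erase_eq_of_notMem (by simp [Ne.symm hmi, Ne.symm hki, hmi, hki])]
  exact Finset.card_pair hmk

lemma single_card_erase {i m : Fin N} (hmi : m ≠ i) :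
    ((({m} : Finset (Fin N)).erase i).card) = 1 := by
  classical
  rw [Finset.erase_eq_of_notMem (by simp [Ne.symm hmi, hmi])]
  simp

lemma uncond_rank2 (hD : ∀ n, 2 ≤ D n) (A : Idx D → ℝ) (i0 i1 : Fin N) (h01 : i0 ≠ i1)
    (vA : ∀ S : Finset (Fin N), (i0 ∈ S ↔ i1 ∈ S) →
      A (pt D hD S) = 1 + (((S.erase i0).card : ℕ) : ℝ))
    (I : Finset (Fin N)) (he : I ≠ ∅) (hu : I ≠ Finset.univ)
    (hs0 : I ≠ {i0}) (hs1 : I ≠ {i1}) (hc0 : I ≠ {i0}ᶜ) (hc1 : I ≠ {i1}ᶜ) :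
    2 ≤ (matricize D I A).rank := by
  classical
  have hce : Iᶜ ≠ ∅ := fun h => hu (by simpa using congrArg compl h)
  have hcs0 : Iᶜ ≠ {i0} := fun h => hc0 (by simpa using congrArg compl h)
  have hcs1 : Iᶜ ≠ {i1} := fun h => hc1 (by simpa using congrArg compl h)
  by_cases hi0 : i0 ∈ I <;> by_cases hi1 : i1 ∈ I
  · -- both in I
    obtain ⟨k, hk⟩ := Finset.nonempty_iff_ne_empty.mpr hce
    rw [Finset.mem_compl] at hk
    have hk0 : k ≠ i0 := fun h => hk (h ▸ hi0)
    have hk1 : k ≠ i1 := fun h => hk (h ▸ hi1)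
    apply rank_ge_two_of_points D I A (pt D hD ∅) (pt D hD {i0, i1, k})
    rw [mixf_pt, mixf_pt]
    have e1 : ((∅ : Finset (Fin N)) ∩ I) ∪ ({i0, i1, k} \ I) = ({k} : Finset (Fin N)) := by
      ext a
      by_cases h1 : a = i0 <;> by_cases h2 : a = i1 <;> by_cases h3 : a = k <;>
        simp_all [Finset.mem_sdiff]
    have e2 : (({i0, i1, k} : Finset (Fin N)) ∩ I) ∪ (∅ \ I) = ({i0, i1} : Finset (Fin N)) := by
      ext a
      by_cases h1 : a = i0 <;> by_cases h2 : a = i1 <;> by_cases h3 : a = k <;>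
        simp_all [Finset.mem_inter]
    rw [e1, e2, vA ∅ (by simp), vA {i0, i1, k} (by simp), vA {k} (by simp [Ne.symm hk0, Ne.symm hk1]),
      vA {i0, i1} (by simp)]
    have c1 : (({i0, i1, k} : Finset (Fin N)).erase i0).card = 2 := by
      rw [show ({i0, i1, k} : Finset (Fin N)) = insert i0 {i1, k} from rfl,
        Finset.erase_insert (by simp [h01, hk0, Ne.symm hk0])]
      exact Finset.card_pair hk1.symm
    have c2 : (({i0, i1} : Finset (Fin N)).erase i0).card = 1 := by
      rw [show ({i0, i1} : Finset (Fin N)) = insert i0 {i1} from rfl,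
        Finset.erase_insert (by simp [h01])]
      simp
    rw [c1, c2, single_card_erase hk0]
    norm_num
  · -- i0 ∈ I, i1 ∉ I
    obtain ⟨m, hmI, hm0⟩ := exists_mem_ne he hs0
    have hm1 : m ≠ i1 := fun h => hi1 (h ▸ hmI)
    obtain ⟨k, hkI', hk1⟩ := exists_mem_ne hce hcs1
    rw [Finset.mem_compl] at hkI'
    have hk0 : k ≠ i0 := fun h => hkI' (h ▸ hi0)
    have hmk : m ≠ k := fun h => hkI' (h ▸ hmI)
    apply rank_ge_two_of_points D I A (pt D hD ∅) (pt D hD {m, k})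
    rw [mixf_pt, mixf_pt]
    have e1 : ((∅ : Finset (Fin N)) ∩ I) ∪ ({m, k} \ I) = ({k} : Finset (Fin N)) := by
      ext a
      by_cases h1 : a = m <;> by_cases h2 : a = k <;> simp_all [Finset.mem_sdiff]
    have e2 : (({m, k} : Finset (Fin N)) ∩ I) ∪ (∅ \ I) = ({m} : Finset (Fin N)) := by
      ext a
      by_cases h1 : a = m <;> by_cases h2 : a = k <;> simp_all [Finset.mem_inter]
    rw [e1, e2, vA ∅ (by simp), vA {m, k} (by simp [Ne.symm hm0, Ne.symm hk0, Ne.symm hm1, Ne.symm hk1]),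
      vA {k} (by simp [Ne.symm hk0, Ne.symm hk1]), vA {m} (by simp [Ne.symm hm0, Ne.symm hm1])]
    rw [pair_card_erase hm0 hk0 hmk, single_card_erase hk0, single_card_erase hm0]
    norm_num
  · -- i1 ∈ I, i0 ∉ I
    obtain ⟨m, hmI, hm1⟩ := exists_mem_ne he hs1
    have hm0 : m ≠ i0 := fun h => hi0 (h ▸ hmI)
    obtain ⟨k, hkI', hk0⟩ := exists_mem_ne hce hcs0
    rw [Finset.mem_compl] at hkI'
    have hk1 : k ≠ i1 := fun h => hkI' (h ▸ hi1)
    have hmk : m ≠ k := fun h => hkI' (h ▸ hmI)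
    apply rank_ge_two_of_points D I A (pt D hD ∅) (pt D hD {m, k})
    rw [mixf_pt, mixf_pt]
    have e1 : ((∅ : Finset (Fin N)) ∩ I) ∪ ({m, k} \ I) = ({k} : Finset (Fin N)) := by
      ext a
      by_cases h1 : a = m <;> by_cases h2 : a = k <;> simp_all [Finset.mem_sdiff]
    have e2 : (({m, k} : Finset (Fin N)) ∩ I) ∪ (∅ \ I) = ({m} : Finset (Fin N)) := by
      ext a
      by_cases h1 : a = m <;> by_cases h2 : a = k <;> simp_all [Finset.mem_inter]
    rw [e1, e2, vA ∅ (by simp), vA {m, k} (by simp [Ne.symm hm0, Ne.symm hk0, Ne.symm hm1, Ne.symm hk1]),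
      vA {k} (by simp [Ne.symm hk0, Ne.symm hk1]), vA {m} (by simp [Ne.symm hm0, Ne.symm hm1])]
    rw [pair_card_erase hm0 hk0 hmk, single_card_erase hk0, single_card_erase hm0]
    norm_num
  · -- both out of I
    obtain ⟨m, hmI⟩ := Finset.nonempty_iff_ne_empty.mpr he
    have hm0 : m ≠ i0 := fun h => hi0 (h ▸ hmI)
    have hm1 : m ≠ i1 := fun h => hi1 (h ▸ hmI)
    apply rank_ge_two_of_points D I A (pt D hD ∅) (pt D hD {i0, i1, m})
    rw [mixf_pt, mixf_pt]
    have e1 : ((∅ : Finset (Fin N)) ∩ I) ∪ ({i0, i1, m} \ I) = ({i0, i1} : Finset (Fin N)) := by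
      ext a
      by_cases h1 : a = i0 <;> by_cases h2 : a = i1 <;> by_cases h3 : a = m <;>
        simp_all [Finset.mem_sdiff]
    have e2 : (({i0, i1, m} : Finset (Fin N)) ∩ I) ∪ (∅ \ I) = ({m} : Finset (Fin N)) := by
      ext a
      by_cases h1 : a = i0 <;> by_cases h2 : a = i1 <;> by_cases h3 : a = m <;>
        simp_all [Finset.mem_inter]
    rw [e1, e2, vA ∅ (by simp), vA {i0, i1, m} (by simp), vA {i0, i1} (by simp),
      vA {m} (by simp [Ne.symm hm0, Ne.symm hm1])]
    have c1 : (({i0, i1, m} : Finset (Fin N)).erase i0).card = 2 := by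
      rw [show ({i0, i1, m} : Finset (Fin N)) = insert i0 {i1, m} from rfl,
        Finset.erase_insert (by simp [h01, hm0, Ne.symm hm0])]
      exact Finset.card_pair (Ne.symm hm1)
    have c2 : (({i0, i1} : Finset (Fin N)).erase i0).card = 1 := by
      rw [show ({i0, i1} : Finset (Fin N)) = insert i0 {i1} from rfl,
        Finset.erase_insert (by simp [h01])]
      simp
    rw [c1, c2, single_card_erase hm0]
    norm_num


lemma rank_AA_val (hD : ∀ n, 2 ≤ D n) (i : Fin N) (I : Finset (Fin N)) (he : I ≠ ∅) :
    (matricize D I (AA D i)).rank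
      = if I = {i} ∨ I = {i}ᶜ ∨ I = Finset.univ then 1 else 2 := by
  classical
  have h1 : AA D i (pt D hD ∅) = 1 := by rw [AA_pt]; simp
  have hge1 : 1 ≤ (matricize D I (AA D i)).rank :=
    rank_ge_one D I _ (pt D hD ∅) (by rw [h1]; norm_num)
  split_ifs with h
  · rcases h with rfl | rfl | rfl
    · exact le_antisymm (rank_AA_singleton D hD i) hge1
    · exact le_antisymm (rank_AA_compl D hD i) hge1
    · exact le_antisymm (rank_le_one_univ D _) hge1
  · push_neg at h
    exact le_antisymm (rank_AA_le_two D hD i I)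
      (rank_AA_ge_two D hD i I he h.2.2 h.1 h.2.1)

end Construction

end HTF
end Helpers

open HTF HTF.MTree in
/-- Proposition 2 in the paper: for every order `N ≥ 3` and mode
dimensions `D_n ≥ 2`, there exists a tensor completion problem such that for every mode
tree `T` over `[N]`, the set of hierarchical tensor ranks of tensors fitting the
observations includes two incomparable elements, neither of which dominates another
element of the set (other than themselves). -/
theorem statement15 {N : ℕ} (hN : 3 ≤ N) (D : Fin N → ℕ) (hD : ∀ n, 2 ≤ D n) :
    ∃ (Wstar : Idx D → ℝ) (Ω : Finset (Idx D)),
      ∀ T : MTree N, T.Valid →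
        ∃ Rt Rt' : {ν : MTree N // ν ∈ T.nodes ∧ ν ≠ T} → ℕ,
          Rt ∈ {g | ∃ A : Idx D → ℝ,
                  (1 / (Ω.card : ℝ)) * ∑ x ∈ Ω, (A x - Wstar x) ^ 2 = 0 ∧
                  ∀ ν : {ν : MTree N // ν ∈ T.nodes ∧ ν ≠ T},
                    g ν = (matricize D ν.1.label A).rank} ∧
          Rt' ∈ {g | ∃ A : Idx D → ℝ,
                  (1 / (Ω.card : ℝ)) * ∑ x ∈ Ω, (A x - Wstar x) ^ 2 = 0 ∧
                  ∀ ν : {ν : MTree N // ν ∈ T.nodes ∧ ν ≠ T},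
                    g ν = (matricize D ν.1.label A).rank} ∧
          ¬ Rt ≤ Rt' ∧ ¬ Rt' ≤ Rt ∧
          ∀ Rt'' ∈ {g | ∃ A : Idx D → ℝ,
                  (1 / (Ω.card : ℝ)) * ∑ x ∈ Ω, (A x - Wstar x) ^ 2 = 0 ∧
                  ∀ ν : {ν : MTree N // ν ∈ T.nodes ∧ ν ≠ T},
                    g ν = (matricize D ν.1.label A).rank},
            Rt'' ≠ Rt → Rt'' ≠ Rt' → ¬ Rt'' ≤ Rt ∧ ¬ Rt'' ≤ Rt' := by
  classical
  have hNz : (0:ℕ) < N := by omega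
  set i0 : Fin N := ⟨0, by omega⟩ with hi0def
  set i1 : Fin N := ⟨1, by omega⟩ with hi1def
  set i2 : Fin N := ⟨2, by omega⟩ with hi2def
  have h01 : i0 ≠ i1 := by simp [hi0def, hi1def, Fin.ext_iff]
  have h02 : i0 ≠ i2 := by simp [hi0def, hi2def, Fin.ext_iff]
  have h12 : i1 ≠ i2 := by simp [hi1def, hi2def, Fin.ext_iff]
  set Ω : Finset (Idx D) := Finset.univ.filter
    (fun x : Idx D => (∀ n, ((x n : ℕ) ≤ 1)) ∧ ((x i0 : ℕ) = (x i1 : ℕ))) with hΩdef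
  have hptΩ : ∀ S : Finset (Fin N), (i0 ∈ S ↔ i1 ∈ S) → pt D hD S ∈ Ω := by
    intro S hS
    rw [hΩdef, Finset.mem_filter]
    refine ⟨Finset.mem_univ _, fun n => pt_le_one D hD S n, ?_⟩
    rw [pt_val, pt_val]
    by_cases h : i0 ∈ S
    · simp [h, hS.mp h]
    · have h1 : i1 ∉ S := fun h' => h (hS.mpr h')
      simp [h, h1]
  have hΩcard : 0 < Ω.card :=
    Finset.card_pos.mpr ⟨pt D hD ∅, hptΩ ∅ (by simp)⟩
  refine ⟨AA D i0, Ω, ?_⟩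
  intro T hV
  obtain ⟨hnodup, hall, hbr⟩ := hV
  have hfit : ∀ A : Idx D → ℝ,
      (1 / (Ω.card : ℝ)) * ∑ x ∈ Ω, (A x - AA D i0 x) ^ 2 = 0 →
      ∀ x ∈ Ω, A x = AA D i0 x := by
    intro A h x hx
    have hc : (1 / (Ω.card : ℝ)) ≠ 0 := by
      apply one_div_ne_zero
      exact ne_of_gt (by exact_mod_cast hΩcard)
    have hsum : ∑ x ∈ Ω, (A x - AA D i0 x) ^ 2 = 0 := by
      rcases mul_eq_zero.mp h with h' | h'
      · exact absurd h' hc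
      · exact h'
    have h0 := (Finset.sum_eq_zero_iff_of_nonneg (fun y _ => sq_nonneg _)).mp hsum x hx
    have := sq_eq_zero_iff.mp h0
    linarith
  have hloss1 : (1 / (Ω.card : ℝ)) * ∑ x ∈ Ω, (AA D i0 x - AA D i0 x) ^ 2 = 0 := by
    simp
  have hA1A0 : ∀ x ∈ Ω, AA D i1 x = AA D i0 x := by
    intro x hx
    rw [hΩdef, Finset.mem_filter] at hx
    obtain ⟨-, -, hx2⟩ := hx
    rw [AA_eq, AA_eq]
    congr 1
    have e0 := Finset.sum_erase_add Finset.univ (tt D x) (Finset.mem_univ i0)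
    have e1 := Finset.sum_erase_add Finset.univ (tt D x) (Finset.mem_univ i1)
    have ht : tt D x i0 = tt D x i1 := by rw [tt, tt, hx2]
    linarith
  have hloss2 : (1 / (Ω.card : ℝ)) * ∑ x ∈ Ω, (AA D i1 x - AA D i0 x) ^ 2 = 0 := by
    have hz : ∑ x ∈ Ω, (AA D i1 x - AA D i0 x) ^ 2 = 0 :=
      Finset.sum_eq_zero (fun x hx => by rw [hA1A0 x hx]; ring)
    rw [hz, mul_zero]
  have hleafmem : ∀ i : Fin N, (MTree.leaf i : MTree N) ∈ T.nodes :=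
    fun i => leaf_mem_nodes T i (hall i)
  have hleafroot : ∀ i : Fin N, (MTree.leaf i : MTree N) ≠ T := by
    intro i
    by_cases h : i = i0
    · exact leaf_ne_root ⟨hnodup, hall, hbr⟩ (h ▸ h01)
    · exact leaf_ne_root ⟨hnodup, hall, hbr⟩ (show i ≠ i0 from h)
  have hlbl : ∀ ν : {ν : MTree N // ν ∈ T.nodes ∧ ν ≠ T}, ν.1.label ≠ ∅ :=
    fun ν => label_nonempty ν.1 (branching_of_mem_nodes T hbr ν.1 ν.2.1)
  have hsing_ne_univ : ∀ i : Fin N, ({i} : Finset (Fin N)) ≠ Finset.univ := by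
    intro i h
    have h2 := congrArg Finset.card h
    rw [Finset.card_singleton, Finset.card_univ, Fintype.card_fin] at h2
    omega
  have hsing_ne_compl : ∀ i j : Fin N, ({i} : Finset (Fin N)) ≠ ({j} : Finset (Fin N))ᶜ := by
    intro i j h
    have h2 := congrArg Finset.card h
    rw [Finset.card_singleton, Finset.card_compl, Finset.card_singleton, Fintype.card_fin] at h2
    omega
  have hsing_ne : ∀ i j : Fin N, i ≠ j → ({i} : Finset (Fin N)) ≠ {j} :=
    fun i j hij h => hij (by simpa using h)
  have hr0 : ∀ i j : Fin N, i ≠ j → (matricize D {j} (AA D i)).rank = 2 := by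
    intro i j hij
    rw [rank_AA_val D hD i {j} (Finset.singleton_ne_empty j), if_neg]
    rintro (h | h | h)
    · exact hsing_ne j i (Ne.symm hij) h
    · exact hsing_ne_compl j i h
    · exact hsing_ne_univ j h
  have hr1 : ∀ i : Fin N, (matricize D {i} (AA D i)).rank = 1 := by
    intro i
    rw [rank_AA_val D hD i {i} (Finset.singleton_ne_empty i), if_pos (Or.inl rfl)]
  have c01 : (({i0, i1} : Finset (Fin N)).erase i0).card = 1 := by
    rw [show ({i0, i1} : Finset (Fin N)) = insert i0 {i1} from rfl,
      Finset.erase_insert (by simp [h01])]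
    simp
  have c012 : (({i0, i1, i2} : Finset (Fin N)).erase i0).card = 2 := by
    rw [show ({i0, i1, i2} : Finset (Fin N)) = insert i0 {i1, i2} from rfl,
      Finset.erase_insert (by simp [h01, h02])]
    exact Finset.card_pair h12
  have key : ∀ i j : Fin N, i ≠ j → i ≠ i2 → j ≠ i2 →
      (∀ s : Fin N, s = i0 ∨ s = i1 → s = i ∨ s = j) →
      ({i, j} : Finset (Fin N)) = {i0, i1} →
      ({i, j, i2} : Finset (Fin N)) = {i0, i1, i2} →
      ∀ A : Idx D → ℝ, (∀ x ∈ Ω, A x = AA D i0 x) →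
      ∀ g : {ν : MTree N // ν ∈ T.nodes ∧ ν ≠ T} → ℕ,
        (∀ ν, g ν = (matricize D ν.1.label A).rank) →
        (∀ ν, g ν ≤ (matricize D ν.1.label (AA D i)).rank) →
        ∀ ν, g ν = (matricize D ν.1.label (AA D i)).rank := by
    intro i j hij hi2 hj2 hmap hpair htrip A hAfit g hg hle ν
    have vA : ∀ S : Finset (Fin N), (i0 ∈ S ↔ i1 ∈ S) →
        A (pt D hD S) = 1 + (((S.erase i0).card : ℕ) : ℝ) := by
      intro S hS
      rw [hAfit _ (hptΩ S hS), AA_pt]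
    have vz : A (pt D hD ∅) = 1 := by
      rw [vA ∅ (by simp)]; simp
    have v2 : A (pt D hD {i2}) = 2 := by
      rw [vA {i2} (by simp [Ne.symm h02, Ne.symm h12, h02, h12]),
        single_card_erase (Ne.symm h02)]
      norm_num
    have v01 : A (pt D hD {i, j}) = 2 := by
      rw [hpair, vA {i0, i1} (by simp), c01]
      norm_num
    have v012 : A (pt D hD {i, j, i2}) = 3 := by
      rw [htrip, vA {i0, i1, i2} (by simp), c012]
      norm_num
    have hIne : ν.1.label ≠ ∅ := hlbl ν
    have hrhs := rank_AA_val D hD i ν.1.label hIne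
    by_cases hI1 : ν.1.label = {i} ∨ ν.1.label = {i}ᶜ ∨ ν.1.label = Finset.univ
    · rw [hrhs, if_pos hI1]
      have hub := hle ν
      rw [hrhs, if_pos hI1] at hub
      have hlb : 1 ≤ g ν := by
        rw [hg ν]
        exact rank_ge_one D ν.1.label A (pt D hD ∅) (by rw [vz]; norm_num)
      omega
    · rw [hrhs, if_neg hI1]
      have hub := hle ν
      rw [hrhs, if_neg hI1] at hub
      push_neg at hI1
      obtain ⟨hIi, hIic, hIu⟩ := hI1
      have hri : (matricize D {i} A).rank ≤ 1 := by
        have h : (matricize D (MTree.leaf i : MTree N).label A).rank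
            ≤ (matricize D (MTree.leaf i : MTree N).label (AA D i)).rank := by
          rw [← hg ⟨.leaf i, hleafmem i, hleafroot i⟩]
          exact hle ⟨.leaf i, hleafmem i, hleafroot i⟩
        rw [label_leaf, hr1 i] at h
        exact h
      by_cases hI2 : ν.1.label = {j} ∨ ν.1.label = {j}ᶜ
      · have h2lb : 2 ≤ g ν := by
          by_contra hcl
          push_neg at hcl
          have hrk : (matricize D ν.1.label A).rank ≤ 1 := by
            rw [← hg ν]; omega
          exact cond_contra D hD A i j i2 hij hi2 hj2 vz v2 v01 v012 hri hrk hI2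
        omega
      · push_neg at hI2
        have h2lb : 2 ≤ g ν := by
          rw [hg ν]
          refine uncond_rank2 D hD A i0 i1 h01 vA ν.1.label hIne hIu ?_ ?_ ?_ ?_
          · rcases hmap i0 (Or.inl rfl) with h | h
            · rw [show ({i0} : Finset (Fin N)) = {i} from by rw [h]]; exact hIi
            · rw [show ({i0} : Finset (Fin N)) = {j} from by rw [h]]; exact hI2.1
          · rcases hmap i1 (Or.inr rfl) with h | h
            · rw [show ({i1} : Finset (Fin N)) = {i} from by rw [h]]; exact hIi
            · rw [show ({i1} : Finset (Fin N)) = {j} from by rw [h]]; exact hI2.1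
          · rcases hmap i0 (Or.inl rfl) with h | h
            · rw [show ({i0} : Finset (Fin N)) = {i} from by rw [h]]; exact hIic
            · rw [show ({i0} : Finset (Fin N)) = {j} from by rw [h]]; exact hI2.2
          · rcases hmap i1 (Or.inr rfl) with h | h
            · rw [show ({i1} : Finset (Fin N)) = {i} from by rw [h]]; exact hIic
            · rw [show ({i1} : Finset (Fin N)) = {j} from by rw [h]]; exact hI2.2
        omega
  refine ⟨fun ν => (matricize D ν.1.label (AA D i0)).rank,
          fun ν => (matricize D ν.1.label (AA D i1)).rank,
          ⟨AA D i0, hloss1, fun ν => rfl⟩,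
          ⟨AA D i1, hloss2, fun ν => rfl⟩,
          ?_, ?_, ?_⟩
  · intro hle
    have h : (matricize D (MTree.leaf i1 : MTree N).label (AA D i0)).rank
        ≤ (matricize D (MTree.leaf i1 : MTree N).label (AA D i1)).rank :=
      hle ⟨.leaf i1, hleafmem i1, hleafroot i1⟩
    rw [label_leaf, hr0 i0 i1 h01, hr1 i1] at h
    omega
  · intro hle
    have h : (matricize D (MTree.leaf i0 : MTree N).label (AA D i1)).rank
        ≤ (matricize D (MTree.leaf i0 : MTree N).label (AA D i0)).rank :=
      hle ⟨.leaf i0, hleafmem i0, hleafroot i0⟩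
    rw [label_leaf, hr0 i1 i0 (Ne.symm h01), hr1 i0] at h
    omega
  · rintro g ⟨A, hlossA, hgA⟩ hne0 hne1
    have hAfit := hfit A hlossA
    constructor
    · intro hle
      exact hne0 (funext (key i0 i1 h01 h02 h12 (fun s hs => hs) rfl rfl A hAfit g hgA hle))
    · intro hle
      refine hne1 (funext (key i1 i0 (Ne.symm h01) h12 h02 (fun s hs => hs.symm)
        (Finset.pair_comm i1 i0) ?_ A hAfit g hgA hle))
      rw [show ({i1, i0, i2} : Finset (Fin N)) = insert i1 (insert i0 {i2}) from rfl,
        Finset.insert_comm]
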